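/- For every odd positive integer k, every odd cycle C_{2m+1} (m ≥ 1) has an almost perfect integer k-matching, and moreover for any prescribed vertex v of the cycle there is such a matching in which v is the deficient vertex (vertex sum k−1). -/

import Mathlib

open SimpleGraph Finset

namespace IntKM

variable {V : Type*}

/-- Sum of edge weights over edges incident to `v`. -/
def vsum [Fintype V] [DecidableEq V] (h : Sym2 V → ℕ) (v : V) : ℕ :=
  ∑ e ∈ Finset.univ.filter (fun e => v ∈ e), h e

/-- `h` is an integer `k`-matching of `G`. -/
def IsIntKMatching [Fintype V] [DecidableEq V] (G : SimpleGraph V) (k : ℕ)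
    (h : Sym2 V → ℕ) : Prop :=
  (∀ e, h e ≤ k) ∧ (∀ e, e ∉ G.edgeSet → h e = 0) ∧ ∀ v, vsum h v ≤ k

/-- `G` has a perfect integer `k`-matching. -/
def HasPerfect [Fintype V] [DecidableEq V] (G : SimpleGraph V) (k : ℕ) : Prop :=
  ∃ h : Sym2 V → ℕ, IsIntKMatching G k h ∧ ∀ v, vsum h v = k

/-- `G` has an almost perfect integer `k`-matching. -/
def HasAlmost [Fintype V] [DecidableEq V] (G : SimpleGraph V) (k : ℕ) : Prop :=
  ∃ h : Sym2 V → ℕ, IsIntKMatching G k h ∧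
    ∃ v' : V, vsum h v' = k - 1 ∧ ∀ v, v ≠ v' → vsum h v = k

/-- `M` is a matching (a set of pairwise non-adjacent edges) of `G`. -/
def IsMatchingSet (G : SimpleGraph V) (M : Finset (Sym2 V)) : Prop :=
  ↑M ⊆ G.edgeSet ∧ ∀ e₁ ∈ M, ∀ e₂ ∈ M, e₁ ≠ e₂ → ∀ v : V, v ∈ e₁ → v ∉ e₂

/-- `G` has a perfect matching. -/
def HasPerfectM (G : SimpleGraph V) : Prop :=
  ∃ M : Finset (Sym2 V), IsMatchingSet G M ∧ ∀ v : V, ∃ e ∈ M, v ∈ e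

/-- `G` has an almost perfect matching. -/
def HasAlmostM (G : SimpleGraph V) : Prop :=
  ∃ M : Finset (Sym2 V), IsMatchingSet G M ∧
    ∃ v' : V, (∀ e ∈ M, v' ∉ e) ∧ ∀ v : V, v ≠ v' → ∃ e ∈ M, v ∈ e

/-- Integer `k`-matching preclusion number `mp^k(G)`. -/
noncomputable def mpk [Fintype V] [DecidableEq V] (G : SimpleGraph V) (k : ℕ) : ℕ :=
  sInf {n | ∃ F : Finset (Sym2 V), ↑F ⊆ G.edgeSet ∧ F.card = n ∧
    ¬ HasPerfect (G.deleteEdges ↑F) k ∧ ¬ HasAlmost (G.deleteEdges ↑F) k}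

/-- Strong integer `k`-matching preclusion number `smp^k(G)`. -/
noncomputable def smpk [Fintype V] [DecidableEq V] (G : SimpleGraph V) (k : ℕ) : ℕ :=
  sInf {n | ∃ (S : Finset V) (F : Finset (Sym2 V)), ↑F ⊆ G.edgeSet ∧ S.card + F.card = n ∧
    ¬ HasPerfect ((G.deleteEdges ↑F).induce ((↑(Sᶜ) : Set V))) k ∧
    ¬ HasAlmost ((G.deleteEdges ↑F).induce ((↑(Sᶜ) : Set V))) k}

/-- Matching preclusion number `mp(G)`. -/
noncomputable def mp [Fintype V] [DecidableEq V] (G : SimpleGraph V) : ℕ :=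
  sInf {n | ∃ F : Finset (Sym2 V), ↑F ⊆ G.edgeSet ∧ F.card = n ∧
    ¬ HasPerfectM (G.deleteEdges ↑F) ∧ ¬ HasAlmostM (G.deleteEdges ↑F)}

/-- Strong matching preclusion number `smp(G)`. -/
noncomputable def smp [Fintype V] [DecidableEq V] (G : SimpleGraph V) : ℕ :=
  sInf {n | ∃ (S : Finset V) (F : Finset (Sym2 V)), ↑F ⊆ G.edgeSet ∧ S.card + F.card = n ∧
    ¬ HasPerfectM ((G.deleteEdges ↑F).induce ((↑(Sᶜ) : Set V))) ∧
    ¬ HasAlmostM ((G.deleteEdges ↑F).induce ((↑(Sᶜ) : Set V)))}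

/-- Number of odd components with at least three vertices. -/
noncomputable def oddBigComponents {W : Type*} (H : SimpleGraph W) : ℕ :=
  Nat.card {c : H.ConnectedComponent // Odd (Nat.card c.supp) ∧ 3 ≤ Nat.card c.supp}

/-- Number of isolated vertices (components with exactly one vertex). -/
noncomputable def isolatedCount {W : Type*} (H : SimpleGraph W) : ℕ :=
  Nat.card {c : H.ConnectedComponent // Nat.card c.supp = 1}

/-- Total weight of an edge-weight function. -/
def totalWeight [Fintype V] [DecidableEq V] (h : Sym2 V → ℕ) : ℕ :=
  ∑ e : Sym2 V, h e

/-- Integer `k`-matching number `μ_k(G)`. -/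
noncomputable def intKMatchingNumber [Fintype V] [DecidableEq V]
    (G : SimpleGraph V) (k : ℕ) : ℕ :=
  sSup {w | ∃ h : Sym2 V → ℕ, IsIntKMatching G k h ∧ totalWeight h = w}

/-- Matching number `μ(G)`. -/
noncomputable def matchingNumber [Fintype V] [DecidableEq V] (G : SimpleGraph V) : ℕ :=
  sSup {n | ∃ M : Finset (Sym2 V), IsMatchingSet G M ∧ M.card = n}

end IntKM

open IntKM

/-- weight function value -/
def IKMf (k j : ℕ) : ℕ := k / 2 + j % 2

/-- edge weight on `s(a,b)` -/
def IKMg (k : ℕ) {N : ℕ} (v a b : Fin (N + 1)) : ℕ :=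
  if b = a + 1 then IKMf k (a - v).val
  else if a = b + 1 then IKMf k (b - v).val else 0

lemma IKM_two_ne {N : ℕ} (hN : 2 ≤ N) : (2 : Fin (N + 1)) ≠ 0 := by
  intro h
  have h2 : ((2 : Fin (N + 1))).val = 2 % (N + 1) := rfl
  have h3 : ((0 : Fin (N + 1))).val = 0 := rfl
  rw [h, h3] at h2
  have h4 : 2 % (N + 1) = 2 := Nat.mod_eq_of_lt (by omega)
  omega

lemma IKM_not_both {N : ℕ} (hN : 2 ≤ N) {a b : Fin (N + 1)}
    (h1 : b = a + 1) (h2 : a = b + 1) : False := by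
  rw [h1, add_assoc] at h2
  have h3 : (1 + 1 : Fin (N + 1)) = 0 := left_eq_add.mp h2
  replace h3 : (2 : Fin (N + 1)) = 0 := by rw [← h3]; ext; simp [Fin.val_add]
  exact IKM_two_ne hN h3

lemma IKMg_symm (k : ℕ) {N : ℕ} (hN : 2 ≤ N) (v a b : Fin (N + 1)) :
    IKMg k v a b = IKMg k v b a := by
  unfold IKMg
  by_cases h1 : b = a + 1 <;> by_cases h2 : a = b + 1
  · exact (IKM_not_both hN h1 h2).elim
  · rw [if_pos h1, if_neg h2, if_pos h1]
  · rw [if_neg h1, if_pos h2, if_pos h2]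
  · rw [if_neg h1, if_neg h2, if_neg h2, if_neg h1]

lemma IKM_ne {N : ℕ} (hN : 2 ≤ N) (u : Fin (N + 1)) : u + 1 ≠ u - 1 := by
  intro h
  have h2 : u = u + (1 + 1) := by rw [← add_assoc, h, sub_add_cancel]
  have h3 := left_eq_add.mp h2
  replace h3 : (2 : Fin (N + 1)) = 0 := by rw [← h3]; ext; simp [Fin.val_add]
  exact IKM_two_ne hN h3

lemma IKM_adj {N : ℕ} (hN : 2 ≤ N) (a : Fin (N + 1)) :
    (SimpleGraph.cycleGraph (N + 1)).Adj a (a + 1) := by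
  rw [SimpleGraph.cycleGraph_adj']
  right
  rw [add_sub_cancel_left, Fin.val_one']
  exact Nat.mod_eq_of_lt (by omega)

lemma IKM_vsum (k : ℕ) {N : ℕ} (hN : 2 ≤ N) (v u : Fin (N + 1)) :
    vsum (fun e => Sym2.lift ⟨fun a b => IKMg k v a b, fun a b => IKMg_symm k hN v a b⟩ e) u
      = IKMf k (u - v).val + IKMf k (u - 1 - v).val := by
  rw [vsum]
  have himg : Finset.univ.filter (fun e => u ∈ e)
      = Finset.image (fun w => s(u, w)) Finset.univ := by
    ext e
    simp [Sym2.mem_iff_exists, eq_comm]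
  rw [himg, Finset.sum_image (by
    intro w _ w' _ hww
    rcases Sym2.eq_iff.mp hww with ⟨_, h⟩ | ⟨h1, h2⟩
    · exact h
    · rw [h2, h1])]
  simp only [Sym2.lift_mk]
  have hzero : ∀ w ∈ Finset.univ, w ∉ ({u + 1, u - 1} : Finset (Fin (N + 1))) →
      IKMg k v u w = 0 := by
    intro w _ hw
    simp only [Finset.mem_insert, Finset.mem_singleton, not_or] at hw
    rw [IKMg, if_neg hw.1, if_neg (fun h => hw.2 (eq_sub_iff_add_eq.mpr h.symm))]
  rw [← Finset.sum_subset (Finset.subset_univ ({u + 1, u - 1} : Finset (Fin (N + 1)))) hzero]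
  rw [Finset.sum_pair (IKM_ne hN u)]
  congr 1
  · rw [IKMg, if_pos rfl]
  · rw [IKMg, if_neg (IKM_ne hN u).symm, if_pos (sub_add_cancel u 1).symm]

theorem stmt5 (k : ℕ) (hk : Odd k) (m : ℕ) (hm : 1 ≤ m)
    (v : Fin (2 * m + 1)) :
    ∃ h : Sym2 (Fin (2 * m + 1)) → ℕ,
      IsIntKMatching (SimpleGraph.cycleGraph (2 * m + 1)) k h ∧
      vsum h v = k - 1 ∧ ∀ u, u ≠ v → vsum h u = k := by
  have hk1 : k % 2 = 1 := Nat.odd_iff.mp hk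
  have hN : 2 ≤ 2 * m := by omega
  have key := fun u => IKM_vsum k hN v u
  have hval0 : IKMf k (v - v).val + IKMf k (v - 1 - v).val = k - 1 := by
    have e2 : v - 1 - v = (0 : Fin (2 * m + 1)) - 1 := by rw [sub_right_comm, sub_self]
    rw [sub_self, e2]
    have h1 : ((0 : Fin (2 * m + 1)) - 1).val = 2 * m := by rw [Fin.coe_sub_one, if_pos rfl]
    rw [h1]
    simp only [IKMf, Fin.val_zero]
    omega
  have hvalu : ∀ u, u ≠ v → IKMf k (u - v).val + IKMf k (u - 1 - v).val = k := by
    intro u hu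
    rw [sub_right_comm]
    have hj : u - v ≠ 0 := sub_ne_zero_of_ne hu
    have hj1 : 1 ≤ (u - v).val := Nat.pos_of_ne_zero (fun hh => hj (Fin.ext hh))
    rw [Fin.coe_sub_one, if_neg hj]
    simp only [IKMf]
    omega
  refine ⟨fun e => Sym2.lift ⟨fun a b => IKMg k v a b, fun a b => IKMg_symm k hN v a b⟩ e,
    ⟨?_, ?_, ?_⟩, ?_, ?_⟩
  · intro e
    induction e using Sym2.ind with
    | _ a b =>
      beta_reduce
      rw [Sym2.lift_mk]
      show (if b = a + 1 then IKMf k (a - v).val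
        else if a = b + 1 then IKMf k (b - v).val else 0) ≤ k
      split_ifs <;> first | (simp only [IKMf]; omega) | omega
  · intro e he
    induction e using Sym2.ind with
    | _ a b =>
      rw [SimpleGraph.mem_edgeSet] at he
      beta_reduce
      rw [Sym2.lift_mk]
      show (if b = a + 1 then IKMf k (a - v).val
        else if a = b + 1 then IKMf k (b - v).val else 0) = 0
      have hn1 : ¬ b = a + 1 := by
        intro h
        rw [h] at he
        exact he (IKM_adj hN a)
      have hn2 : ¬ a = b + 1 := by
        intro h
        rw [h] at he
        exact he (IKM_adj hN b).symm
      rw [if_neg hn1, if_neg hn2]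
  · intro u
    rw [key u]
    rcases eq_or_ne u v with rfl | hu
    · rw [hval0]; omega
    · rw [hvalu u hu]
  · rw [key v, hval0]
  · intro u hu
    rw [key u, hvalu u hu]
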